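/- arXiv:0710.0330 — 3 statements merged into one kernel-verified Lean document; each statement's English description precedes it below -/
import Mathlib

section
/- Let A be a commutative ring and L a unit of A. Every element x of the A-subalgebra 𝓡 of A[[T]] generated by the elements T^b·(T^b − L^a)^{−1} (a ∈ ℤ, b ≥ 1) admits a lim-representation: there exist polynomials P, Q ∈ A[T] such that Q is monic, the constant coefficient Q(0) is a unit of A, deg P ≤ deg Q, and x · Q = P in A[[T]]. -/
open PowerSeries

/-- The `A`-subalgebra 𝓡 of `A⟦T⟧` generated by the elements `T^b * (T^b - L^a)⁻¹`
for `a ∈ ℤ`, `b ≥ 1`. -/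
noncomputable def RatAlg (A : Type*) [CommRing A] (L : Aˣ) : Subalgebra A (PowerSeries A) :=
  Algebra.adjoin A
    {x : PowerSeries A | ∃ (a : ℤ) (b : ℕ), 1 ≤ b ∧
      x = (PowerSeries.X : PowerSeries A) ^ b *
        Ring.inverse ((PowerSeries.X : PowerSeries A) ^ b -
          PowerSeries.C ((L ^ a : Aˣ) : A))}

/-- A lim-representation of a power series `x`: polynomials `P, Q` with `Q` monic,
`Q(0)` a unit, `deg P ≤ deg Q`, and `x = P/Q`, i.e. `x * Q = P` in `A⟦T⟧`. -/
def IsLimRep {A : Type*} [CommRing A] (x : PowerSeries A) (P Q : Polynomial A) : Prop :=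
  Q.Monic ∧ IsUnit (Q.coeff 0) ∧ P.degree ≤ Q.degree ∧
    x * (Q : PowerSeries A) = (P : PowerSeries A)

/-- every element of 𝓡 admits a lim-representation. -/
theorem stmt4 {A : Type*} [CommRing A] (L : Aˣ) (x : PowerSeries A)
    (hx : x ∈ RatAlg A L) :
    ∃ P Q : Polynomial A, IsLimRep x P Q := by
  obtain hA | hA := subsingleton_or_nontrivial A
  · exact ⟨0, 1, Polynomial.monic_one, by simp, by simp, Subsingleton.elim _ _⟩
  induction hx using Algebra.adjoin_induction with
  | mem x hxs =>
    obtain ⟨a, b, hb, rfl⟩ := hxs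
    have hlt : (Polynomial.C ((L ^ a : Aˣ) : A)).degree <
        (Polynomial.X ^ b : Polynomial A).degree := by
      refine Polynomial.degree_C_le.trans_lt ?_
      rw [Polynomial.degree_X_pow]
      exact_mod_cast Nat.lt_of_lt_of_le Nat.zero_lt_one hb
    refine ⟨Polynomial.X ^ b, Polynomial.X ^ b - Polynomial.C ((L ^ a : Aˣ) : A), ?_, ?_, ?_, ?_⟩
    · exact (Polynomial.monic_X_pow b).sub_of_left hlt
    · have : (Polynomial.X ^ b - Polynomial.C ((L ^ a : Aˣ) : A)).coeff 0
          = -((L ^ a : Aˣ) : A) := by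
        simp [Polynomial.coeff_X_pow, (show ¬ (0 = b) by omega)]
      rw [this]
      exact (L ^ a).isUnit.neg
    · rw [Polynomial.degree_sub_eq_left_of_degree_lt hlt]
    · have hD : IsUnit ((PowerSeries.X : PowerSeries A) ^ b -
          PowerSeries.C ((L ^ a : Aˣ) : A)) := by
        rw [PowerSeries.isUnit_iff_constantCoeff]
        simp only [map_sub, map_pow, constantCoeff_X, constantCoeff_C]
        rw [zero_pow (by omega), zero_sub]
        exact (L ^ a).isUnit.neg
      push_cast [Polynomial.coe_sub, Polynomial.coe_pow, Polynomial.coe_X, Polynomial.coe_C]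
      rw [mul_assoc, Ring.inverse_mul_cancel _ hD, mul_one]
  | algebraMap r =>
    exact ⟨Polynomial.C r, 1, Polynomial.monic_one, by simp,
      Polynomial.degree_C_le.trans Polynomial.degree_one.ge, by
        simp [PowerSeries.algebraMap_apply, Polynomial.coe_one, Polynomial.coe_C]⟩
  | add x y hx hy ihx ihy =>
    obtain ⟨P1, Q1, hQ1m, hQ1u, hd1, he1⟩ := ihx
    obtain ⟨P2, Q2, hQ2m, hQ2u, hd2, he2⟩ := ihy
    refine ⟨P1 * Q2 + P2 * Q1, Q1 * Q2, hQ1m.mul hQ2m, by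
        rw [Polynomial.mul_coeff_zero]; exact hQ1u.mul hQ2u, ?_, ?_⟩
    · rw [hQ2m.degree_mul]
      refine (Polynomial.degree_add_le _ _).trans (max_le ?_ ?_)
      · exact (Polynomial.degree_mul_le _ _).trans (add_le_add_left hd1 _)
      · exact (Polynomial.degree_mul_le _ _).trans
          (by rw [add_comm Q1.degree]; exact add_le_add_left hd2 _)
    · push_cast [Polynomial.coe_add, Polynomial.coe_mul]
      calc (x + y) * ((Q1 : PowerSeries A) * (Q2 : PowerSeries A))
          = (x * Q1) * Q2 + (y * Q2) * Q1 := by ring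
        _ = (P1 : PowerSeries A) * Q2 + (P2 : PowerSeries A) * Q1 := by rw [he1, he2]
  | mul x y hx hy ihx ihy =>
    obtain ⟨P1, Q1, hQ1m, hQ1u, hd1, he1⟩ := ihx
    obtain ⟨P2, Q2, hQ2m, hQ2u, hd2, he2⟩ := ihy
    refine ⟨P1 * P2, Q1 * Q2, hQ1m.mul hQ2m, by
        rw [Polynomial.mul_coeff_zero]; exact hQ1u.mul hQ2u, ?_, ?_⟩
    · rw [hQ2m.degree_mul]
      exact (Polynomial.degree_mul_le _ _).trans (add_le_add hd1 hd2)
    · push_cast [Polynomial.coe_mul]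
      calc (x * y) * ((Q1 : PowerSeries A) * (Q2 : PowerSeries A))
          = (x * Q1) * (y * Q2) := by ring
        _ = (P1 : PowerSeries A) * (P2 : PowerSeries A) := by rw [he1, he2]
end

section
/- Let A be a commutative ring, L a unit of A, and d ≥ 1 an integer. The A-linear truncation operator x ↦ x[d] on A[[T]] (which keeps only the coefficients in degrees divisible by d) maps the A-subalgebra 𝓡 generated by the elements T^b·(T^b − L^a)^{−1} (a ∈ ℤ, b ≥ 1) into itself: for every x ∈ 𝓡, x[d] ∈ 𝓡. -/
open PowerSeries

/-- The truncation `x ↦ x[d]` keeping only the coefficients in degrees divisible by `d`. -/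
noncomputable def truncDiv (A : Type*) [CommRing A] (d : ℕ) (x : PowerSeries A) :
    PowerSeries A :=
  PowerSeries.mk fun i => if d ∣ i then PowerSeries.coeff i x else 0

section Aux

variable {A : Type*} [CommRing A]

/-- The geometric-type series `∑_{j≥0} v^j T^{jB}`. -/
noncomputable def geomPS (v : A) (B : ℕ) : PowerSeries A :=
  PowerSeries.mk fun n => if B ∣ n then v ^ (n / B) else 0

lemma coeff_geomPS (v : A) (B n : ℕ) :
    coeff n (geomPS v B) = if B ∣ n then v ^ (n / B) else 0 :=
  coeff_mk _ _

lemma one_sub_mul_geomPS (v : A) {B : ℕ} (hB : 1 ≤ B) :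
    (1 - C v * X ^ B) * geomPS v B = 1 := by
  have h : (1 - C v * X ^ B) * geomPS v B
      = geomPS v B - (C v * geomPS v B) * X ^ B := by ring
  rw [h]
  ext n
  rw [map_sub, coeff_geomPS, coeff_mul_X_pow', coeff_one]
  by_cases hn : n = 0
  · subst hn
    rw [if_pos (dvd_zero B), if_neg (by omega), if_pos rfl]
    simp
  · rw [if_neg hn]
    by_cases hdn : B ∣ n
    · have hBn : B ≤ n := Nat.le_of_dvd (by omega) hdn
      rw [if_pos hdn, if_pos hBn, coeff_C_mul, coeff_geomPS]
      obtain ⟨k, rfl⟩ := hdn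
      have hk : 1 ≤ k := by
        rcases Nat.eq_zero_or_pos k with h | h
        · subst h; simp at hn
        · exact h
      obtain ⟨k', rfl⟩ : ∃ k', k = k' + 1 := ⟨k - 1, by omega⟩
      have h1 : B * (k' + 1) - B = B * k' := by
        have : B * (k' + 1) = B * k' + B := by ring
        omega
      rw [h1, if_pos (Dvd.intro k' rfl), Nat.mul_div_cancel_left _ (by omega : 0 < B),
        Nat.mul_div_cancel_left _ (by omega : 0 < B)]
      ring
    · rw [if_neg hdn]
      by_cases hBn : B ≤ n
      · rw [if_pos hBn, coeff_C_mul, coeff_geomPS, if_neg, mul_zero, sub_zero]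
        intro hc
        exact hdn (by
          have := Nat.sub_add_cancel hBn
          calc B ∣ (n - B) + B := dvd_add hc dvd_rfl
          _ = n := this)
      · rw [if_neg hBn, sub_zero]

lemma geomPS_eq (v : A) {B : ℕ} (hB : 1 ≤ B) :
    geomPS v B = 1 + C v * (X ^ B * geomPS v B) := by
  linear_combination one_sub_mul_geomPS v hB

lemma geomPS_decomp (v : A) {B m : ℕ} (hB : 1 ≤ B) (hm : 1 ≤ m) :
    geomPS v B = ∑ t ∈ Finset.range m,
      C (v ^ t) * (X ^ (t * B) * geomPS (v ^ m) (m * B)) := by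
  have hB0 : 0 < B := hB
  have hm0 : 0 < m := hm
  have hmB : 0 < m * B := Nat.mul_pos hm0 hB0
  ext n
  rw [coeff_geomPS, map_sum]
  have hterm : ∀ t, coeff n (C (v ^ t) * (X ^ (t * B) * geomPS (v ^ m) (m * B)))
      = v ^ t * (if t * B ≤ n ∧ (m * B) ∣ (n - t * B)
          then (v ^ m) ^ ((n - t * B) / (m * B)) else 0) := by
    intro t
    rw [coeff_C_mul, mul_comm ((X : PowerSeries A) ^ (t * B)) _, coeff_mul_X_pow']
    congr 1
    by_cases h1 : t * B ≤ n
    · rw [if_pos h1, coeff_geomPS]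
      by_cases h2 : m * B ∣ n - t * B
      · rw [if_pos h2, if_pos ⟨h1, h2⟩]
      · rw [if_neg h2, if_neg (fun hc => h2 hc.2)]
    · rw [if_neg h1, if_neg (fun hc => h1 hc.1)]
  have hsum : ∑ t ∈ Finset.range m,
      coeff n (C (v ^ t) * (X ^ (t * B) * geomPS (v ^ m) (m * B)))
      = ∑ t ∈ Finset.range m, v ^ t * (if t * B ≤ n ∧ (m * B) ∣ (n - t * B)
          then (v ^ m) ^ ((n - t * B) / (m * B)) else 0) :=
    Finset.sum_congr rfl fun t _ => hterm t
  rw [hsum]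
  by_cases hdn : B ∣ n
  · obtain ⟨q, rfl⟩ := hdn
    rw [if_pos (Dvd.intro q rfl), Nat.mul_div_cancel_left _ hB0]
    set t₀ := q % m with ht₀def
    have ht₀ : t₀ < m := Nat.mod_lt q hm0
    have ht₀q : t₀ ≤ q := Nat.mod_le q m
    have hqeq : q = m * (q / m) + t₀ := (Nat.div_add_mod q m).symm
    rw [Finset.sum_eq_single t₀]
    · -- main term
      have hle : t₀ * B ≤ B * q := by
        rw [mul_comm B q]
        exact Nat.mul_le_mul_right B ht₀q
      have hsub : B * q - t₀ * B = (m * B) * (q / m) := by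
        have h2 : B * q = (m * B) * (q / m) + t₀ * B := by
          calc B * q = B * (m * (q / m) + t₀) := by rw [← hqeq]
          _ = (m * B) * (q / m) + t₀ * B := by ring
        omega
      have hdvd2 : (m * B) ∣ (B * q - t₀ * B) := ⟨q / m, hsub⟩
      rw [if_pos ⟨hle, hdvd2⟩, hsub, Nat.mul_div_cancel_left _ hmB, ← pow_mul, ← pow_add]
      congr 1
      omega
    · intro t ht htne
      rw [Finset.mem_range] at ht
      split_ifs with hc
      · exfalso
        obtain ⟨hle, hdvd2⟩ := hc
        have htq : t ≤ q := by
          have : t * B ≤ q * B := by rw [mul_comm q B]; exact hle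
          exact Nat.le_of_mul_le_mul_right this hB0
        have hsub : B * q - t * B = (q - t) * B := by
          rw [tsub_mul, mul_comm q B]
        rw [hsub] at hdvd2
        have hmd : m ∣ q - t := (Nat.mul_dvd_mul_iff_right hB0).mp hdvd2
        obtain ⟨j, hj⟩ := hmd
        have hq2 : q = t + m * j := by
          have := Nat.add_sub_cancel' htq
          omega
        apply htne
        rw [ht₀def, hq2, mul_comm m j, Nat.add_mul_mod_self_right, Nat.mod_eq_of_lt ht]
      · rw [mul_zero]
    · intro h
      exact absurd (Finset.mem_range.mpr ht₀) h
  · rw [if_neg hdn]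
    symm
    apply Finset.sum_eq_zero
    intro t _
    split_ifs with hc
    · exfalso
      obtain ⟨hle, hdvd2⟩ := hc
      apply hdn
      have h1 : B ∣ t * B := dvd_mul_left B t
      have h2 : B ∣ m * B := dvd_mul_left B m
      have h3 : B ∣ n - t * B := dvd_trans h2 hdvd2
      have := Nat.sub_add_cancel hle
      calc B ∣ (n - t * B) + t * B := dvd_add h3 h1
      _ = n := this
    · rw [mul_zero]

/-- `f` is supported in degrees `≡ e mod d`. -/
def PureRes (d : ℕ) (e : ZMod d) (f : PowerSeries A) : Prop :=
  ∀ n : ℕ, coeff n f ≠ 0 → (n : ZMod d) = e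

lemma pureRes_C (d : ℕ) (a : A) : PureRes d 0 (C a) := by
  intro n h
  rw [coeff_C] at h
  by_cases hn : n = 0
  · subst hn; simp
  · rw [if_neg hn] at h; exact absurd rfl h

lemma pureRes_one (d : ℕ) : PureRes d 0 (1 : PowerSeries A) := by
  have := pureRes_C (A := A) d 1
  rwa [map_one] at this

lemma pureRes_X_pow (d o : ℕ) : PureRes d (o : ZMod d) ((X : PowerSeries A) ^ o) := by
  intro n h
  rw [coeff_X_pow] at h
  by_cases hn : n = o
  · subst hn; rfl
  · rw [if_neg hn] at h; exact absurd rfl h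

lemma pureRes_geomPS {d B : ℕ} (hdB : d ∣ B) (v : A) : PureRes d 0 (geomPS v B) := by
  intro n h
  rw [coeff_geomPS] at h
  by_cases hBn : B ∣ n
  · exact (ZMod.natCast_eq_zero_iff n d).mpr (dvd_trans hdB hBn)
  · rw [if_neg hBn] at h; exact absurd rfl h

lemma pureRes_mul {d : ℕ} {e e' : ZMod d} {f g : PowerSeries A}
    (hf : PureRes d e f) (hg : PureRes d e' g) : PureRes d (e + e') (f * g) := by
  intro n h
  rw [coeff_mul] at h
  obtain ⟨p, hp, hne⟩ := Finset.exists_ne_zero_of_sum_ne_zero h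
  have h1 : coeff p.1 f ≠ 0 := fun hz => hne (by rw [hz, zero_mul])
  have h2 : coeff p.2 g ≠ 0 := fun hz => hne (by rw [hz, mul_zero])
  have hpn : p.1 + p.2 = n := Finset.HasAntidiagonal.mem_antidiagonal.mp hp
  rw [← hpn]
  push_cast
  rw [hf _ h1, hg _ h2]

/-- The slice operator keeping coefficients in degrees `≡ ρ mod d`, as a linear map. -/
noncomputable def sliceL (d : ℕ) (ρ : ZMod d) : PowerSeries A →ₗ[A] PowerSeries A where
  toFun f := PowerSeries.mk fun n => if (n : ZMod d) = ρ then coeff n f else 0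
  map_add' f g := by
    ext n
    simp only [coeff_mk, map_add]
    split_ifs <;> simp
  map_smul' a f := by
    ext n
    simp only [coeff_mk, map_smul, RingHom.id_apply, PowerSeries.coeff_smul]
    split_ifs <;> simp

lemma coeff_sliceL {d : ℕ} (ρ : ZMod d) (f : PowerSeries A) (n : ℕ) :
    coeff n (sliceL d ρ f) = if (n : ZMod d) = ρ then coeff n f else 0 := by
  simp only [sliceL, LinearMap.coe_mk, AddHom.coe_mk]
  exact coeff_mk _ _

lemma sliceL_mul_pure {d : ℕ} {e : ZMod d} {f : PowerSeries A} (hf : PureRes d e f)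
    (ρ : ZMod d) (y : PowerSeries A) :
    sliceL d ρ (f * y) = f * sliceL d (ρ - e) y := by
  ext n
  rw [coeff_sliceL]
  by_cases hn : (n : ZMod d) = ρ
  · rw [if_pos hn, coeff_mul, coeff_mul]
    apply Finset.sum_congr rfl
    intro p hp
    rw [coeff_sliceL]
    by_cases hf1 : coeff p.1 f = 0
    · rw [hf1, zero_mul, zero_mul]
    · have hres := hf _ hf1
      have hpn : p.1 + p.2 = n := Finset.HasAntidiagonal.mem_antidiagonal.mp hp
      have h2 : e + ((p.2 : ℕ) : ZMod d) = ρ := by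
        rw [← hn, ← hpn]
        push_cast
        rw [hres]
      rw [if_pos (eq_sub_of_add_eq' h2)]
  · rw [if_neg hn, coeff_mul]
    symm
    apply Finset.sum_eq_zero
    intro p hp
    rw [coeff_sliceL]
    by_cases hf1 : coeff p.1 f = 0
    · rw [hf1, zero_mul]
    · have hres := hf _ hf1
      have hpn : p.1 + p.2 = n := Finset.HasAntidiagonal.mem_antidiagonal.mp hp
      have : ¬(((p.2 : ℕ) : ZMod d) = ρ - e) := by
        intro hc
        apply hn
        rw [← hpn]
        push_cast
        rw [hres, hc]
        ring
      rw [if_neg this, mul_zero]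

lemma sliceL_pure {d : ℕ} {e : ZMod d} {f : PowerSeries A} (hf : PureRes d e f)
    (ρ : ZMod d) : sliceL d ρ f = if ρ = e then f else 0 := by
  ext n
  rw [coeff_sliceL]
  by_cases h1 : (n : ZMod d) = ρ
  · rw [if_pos h1]
    by_cases h2 : ρ = e
    · rw [if_pos h2]
    · rw [if_neg h2, map_zero]
      by_contra hne
      exact h2 (h1 ▸ (hf n hne))
  · rw [if_neg h1]
    by_cases h2 : ρ = e
    · rw [if_pos h2]
      by_contra hne
      have : coeff n f ≠ 0 := fun hz => hne hz.symm
      exact h1 ((hf n this).trans h2.symm)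
    · rw [if_neg h2, map_zero]

variable (L : Aˣ)

lemma ringInverse_eq (a : ℤ) {B : ℕ} (hB : 1 ≤ B) :
    Ring.inverse ((X : PowerSeries A) ^ B - C ((L ^ a : Aˣ) : A))
      = -(C ((L ^ (-a) : Aˣ) : A) * geomPS ((L ^ (-a) : Aˣ) : A) B) := by
  set v : A := ((L ^ (-a) : Aˣ) : A) with hv
  have hva : C ((L ^ a : Aˣ) : A) * C v = 1 := by
    rw [← map_mul]
    have : (L ^ a) * (L ^ (-a)) = 1 := by
      rw [← zpow_add]
      simp
    rw [hv, ← Units.val_mul, this, Units.val_one, map_one]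
  have key1 : ((X : PowerSeries A) ^ B - C ((L ^ a : Aˣ) : A)) * (-(C v * geomPS v B)) = 1 := by
    linear_combination one_sub_mul_geomPS v hB + geomPS v B * hva
  have hu : ((X : PowerSeries A) ^ B - C ((L ^ a : Aˣ) : A))
      = ↑(Units.mkOfMulEqOne _ _ key1) := rfl
  rw [hu, Ring.inverse_unit]
  rfl

lemma XB_geomPS_mem (c : ℤ) {B : ℕ} (hB : 1 ≤ B) :
    (X : PowerSeries A) ^ B * geomPS ((L ^ c : Aˣ) : A) B ∈ RatAlg A L := by
  have hgen : (X : PowerSeries A) ^ B *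
      Ring.inverse ((X : PowerSeries A) ^ B - C ((L ^ (-c) : Aˣ) : A)) ∈ RatAlg A L :=
    Algebra.subset_adjoin ⟨-c, B, hB, rfl⟩
  rw [ringInverse_eq L (-c) hB, neg_neg] at hgen
  set v : A := ((L ^ c : Aˣ) : A) with hv
  set w : A := ((L ^ (-c) : Aˣ) : A) with hw
  have hvw : C w * C v = 1 := by
    rw [← map_mul]
    have : (L ^ (-c)) * (L ^ c) = 1 := by
      rw [← zpow_add]
      simp
    rw [hw, hv, ← Units.val_mul, this, Units.val_one, map_one]
  have heq : (X : PowerSeries A) ^ B * geomPS v B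
      = C w * (X ^ B * (-(C v * geomPS v B))) * (-1) := by
    linear_combination (-((X : PowerSeries A) ^ B * geomPS v B)) * hvw
  rw [heq]
  refine mul_mem (mul_mem ?_ hgen) ?_
  · rw [PowerSeries.C_eq_algebraMap]
    exact Subalgebra.algebraMap_mem _ _
  · exact neg_mem (one_mem _)

lemma geomPS_mem (c : ℤ) {B : ℕ} (hB : 1 ≤ B) :
    geomPS ((L ^ c : Aˣ) : A) B ∈ RatAlg A L := by
  rw [geomPS_eq _ hB]
  refine add_mem (one_mem _) (mul_mem ?_ (XB_geomPS_mem L c hB))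
  rw [PowerSeries.C_eq_algebraMap]
  exact Subalgebra.algebraMap_mem _ _

lemma XH_mem : (X : PowerSeries A) * geomPS (1 : A) 1 ∈ RatAlg A L := by
  have := XB_geomPS_mem L 0 (le_refl 1)
  simpa using this

lemma H_mem : geomPS (1 : A) 1 ∈ RatAlg A L := by
  have := geomPS_mem L 0 (le_refl 1)
  simpa using this

lemma term_mem (c : ℤ) {B : ℕ} (hB : 1 ≤ B) {e : ℕ} (he : e ≤ 2 * B - 1) :
    (X : PowerSeries A) ^ e * (geomPS (1 : A) 1) ^ (B - 1)
      * geomPS ((L ^ c : Aˣ) : A) B ∈ RatAlg A L := by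
  set H : PowerSeries A := geomPS (1 : A) 1 with hH
  rcases le_or_gt e (B - 1) with h1 | h2
  · have hsplit : (X : PowerSeries A) ^ e * H ^ (B - 1)
        = (X * H) ^ e * H ^ (B - 1 - e) := by
      have h3 : e + (B - 1 - e) = B - 1 := by omega
      rw [mul_pow, mul_assoc, ← pow_add, h3]
    rw [hsplit]
    exact mul_mem (mul_mem (pow_mem (XH_mem L) e) (pow_mem (H_mem L) _)) (geomPS_mem L c hB)
  · have hBe : B ≤ e := by omega
    have hj : e - B ≤ B - 1 := by omega
    have hsplit : (X : PowerSeries A) ^ e * H ^ (B - 1)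
        * geomPS ((L ^ c : Aˣ) : A) B
        = (X ^ B * geomPS ((L ^ c : Aˣ) : A) B)
          * ((X * H) ^ (e - B) * H ^ ((B - 1) - (e - B))) := by
      have h3 : B + (e - B) = e := by omega
      have h4 : (e - B) + ((B - 1) - (e - B)) = B - 1 := by omega
      have hX : (X : PowerSeries A) ^ e = X ^ B * X ^ (e - B) := by
        rw [← pow_add, h3]
      have hHs : H ^ (B - 1) = H ^ (e - B) * H ^ ((B - 1) - (e - B)) := by
        rw [← pow_add, h4]
      rw [hX, hHs, mul_pow]
      ring
    rw [hsplit]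
    exact mul_mem (XB_geomPS_mem L c hB)
      (mul_mem (pow_mem (XH_mem L) _) (pow_mem (H_mem L) _))

/-- Master lemma: `X^o · geom(L^c, B) ∈ 𝓡` for every `o ≤ B`. -/
lemma lemA (c : ℤ) {o B : ℕ} (hB : 1 ≤ B) (ho : o ≤ B) :
    (X : PowerSeries A) ^ o * geomPS ((L ^ c : Aˣ) : A) B ∈ RatAlg A L := by
  set H : PowerSeries A := geomPS (1 : A) 1 with hHdef
  set v : A := ((L ^ c : Aˣ) : A) with hv
  have hone : ((1 : PowerSeries A) - X) * H = 1 := by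
    have := one_sub_mul_geomPS (1 : A) (le_refl 1)
    simpa using this
  have hpow : ((1 : PowerSeries A) - X) ^ (B - 1) * H ^ (B - 1) = 1 := by
    rw [← mul_pow, hone, one_pow]
  have hexp : (X : PowerSeries A) ^ o * geomPS v B
      = ∑ j ∈ Finset.range (B - 1 + 1),
        (1 : PowerSeries A) ^ j * (-X) ^ (B - 1 - j) * ((B - 1).choose j : PowerSeries A)
          * (H ^ (B - 1) * (X ^ o * geomPS v B)) := by
    calc (X : PowerSeries A) ^ o * geomPS v B
        = (((1 : PowerSeries A) - X) ^ (B - 1) * H ^ (B - 1)) * (X ^ o * geomPS v B) := by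
          rw [hpow, one_mul]
      _ = (((1 : PowerSeries A) + (-X)) ^ (B - 1)) * (H ^ (B - 1) * (X ^ o * geomPS v B)) := by
          ring
      _ = _ := by
          rw [add_pow, Finset.sum_mul]
  rw [hexp]
  apply sum_mem
  intro j hj
  rw [Finset.mem_range] at hj
  set k : ℕ := B - 1 - j with hk
  have hterm : (1 : PowerSeries A) ^ j * (-X) ^ k * ((B - 1).choose j : PowerSeries A)
      * (H ^ (B - 1) * (X ^ o * geomPS v B))
      = ((-1 : PowerSeries A) ^ k * ((B - 1).choose j : PowerSeries A))
        * (X ^ (o + k) * H ^ (B - 1) * geomPS v B) := by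
    rw [neg_pow, pow_add]
    ring
  rw [hterm]
  have hkB : k ≤ B - 1 := by omega
  have he : o + k ≤ 2 * B - 1 := by omega
  refine mul_mem (mul_mem (pow_mem (neg_mem (one_mem _)) k) ?_) (term_mem L c hB he)
  have : ((B - 1).choose j : PowerSeries A) = C (((B - 1).choose j : A)) := by
    rw [map_natCast]
  rw [this, PowerSeries.C_eq_algebraMap]
  exact Subalgebra.algebraMap_mem _ _

/-- The auxiliary generating set. -/
def SGen (A : Type*) [CommRing A] (L : Aˣ) : Set (PowerSeries A) :=
  {f | ∃ (c : ℤ) (o B : ℕ), 1 ≤ B ∧ o ≤ B ∧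
    f = (X : PowerSeries A) ^ o * geomPS ((L ^ c : Aˣ) : A) B}

lemma slice_list_prod {d : ℕ} (hd : 1 ≤ d) (l : List (PowerSeries A))
    (hl : ∀ f ∈ l, f ∈ SGen A L) (ρ : ZMod d) :
    sliceL d ρ l.prod ∈ RatAlg A L := by
  induction l generalizing ρ with
  | nil =>
    rw [List.prod_nil, sliceL_pure (pureRes_one d) ρ]
    split_ifs
    · exact one_mem _
    · exact zero_mem _
  | cons f l ih =>
    obtain ⟨c, o, B, hB, hoB, rfl⟩ := hl f (List.mem_cons_self (a := f) (l := l))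
    set v : A := ((L ^ c : Aˣ) : A) with hv
    have hg0 : 0 < Nat.gcd d B := Nat.gcd_pos_of_pos_left B (by omega)
    set m : ℕ := d / Nat.gcd d B with hmdef
    have hm : 1 ≤ m := by
      rw [hmdef]
      exact Nat.one_le_div_iff hg0 |>.mpr (Nat.le_of_dvd (by omega) (Nat.gcd_dvd_left d B))
    have hdvd : d ∣ m * B := by
      obtain ⟨B', hB'⟩ := Nat.gcd_dvd_right d B
      refine ⟨B', ?_⟩
      have hmg : m * Nat.gcd d B = d := Nat.div_mul_cancel (Nat.gcd_dvd_left d B)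
      calc m * B = m * (Nat.gcd d B * B') := by rw [← hB']
        _ = (m * Nat.gcd d B) * B' := by ring
        _ = d * B' := by rw [hmg]
    rw [List.prod_cons, geomPS_decomp v hB hm, Finset.mul_sum, Finset.sum_mul, map_sum]
    apply sum_mem
    intro t ht
    rw [Finset.mem_range] at ht
    have hpure : PureRes d (((o + t * B : ℕ) : ZMod d))
        ((X : PowerSeries A) ^ o * (C (v ^ t) * (X ^ (t * B) * geomPS (v ^ m) (m * B)))) := by
      have h1 := pureRes_mul (pureRes_X_pow d o)
        (pureRes_mul (pureRes_C d (v ^ t))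
          (pureRes_mul (pureRes_X_pow d (t * B)) (pureRes_geomPS hdvd (v ^ m))))
      have h2 : ((o : ZMod d)) + (0 + (((t * B : ℕ) : ZMod d) + 0))
          = ((o + t * B : ℕ) : ZMod d) := by
        push_cast
        ring
      rwa [h2] at h1
    rw [sliceL_mul_pure hpure]
    refine mul_mem ?_ (ih (fun f hf => hl f (List.mem_cons_of_mem _ hf)) _)
    have hP : (X : PowerSeries A) ^ o * (C (v ^ t) * (X ^ (t * B) * geomPS (v ^ m) (m * B)))
        = C (v ^ t) * (X ^ (o + t * B) * geomPS (v ^ m) (m * B)) := by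
      rw [pow_add]
      ring
    rw [hP]
    refine mul_mem ?_ ?_
    · rw [PowerSeries.C_eq_algebraMap]
      exact Subalgebra.algebraMap_mem _ _
    · have hvm : v ^ m = ((L ^ (c * (m : ℤ)) : Aˣ) : A) := by
        rw [zpow_mul, zpow_natCast, Units.val_pow_eq_pow_val]
      have hmB1 : 1 ≤ m * B := Nat.mul_pos hm hB
      have hbound : o + t * B ≤ m * B := by
        have h1 : o + t * B ≤ B + t * B := by omega
        have h2 : B + t * B = (t + 1) * B := by ring
        have h3 : (t + 1) * B ≤ m * B := Nat.mul_le_mul_right B (by omega)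
        omega
      rw [hvm]
      exact lemA L _ hmB1 hbound

lemma truncDiv_eq_sliceL {d : ℕ} (hd : 1 ≤ d) (x : PowerSeries A) :
    truncDiv A d x = sliceL d (0 : ZMod d) x := by
  ext n
  simp only [truncDiv, coeff_mk, coeff_sliceL]
  exact if_congr (ZMod.natCast_eq_zero_iff n d).symm rfl rfl

end Aux

/-- the truncation operator `x ↦ x[d]` maps 𝓡 into itself. -/
theorem stmt6 {A : Type*} [CommRing A] (L : Aˣ) (d : ℕ) (hd : 1 ≤ d) :
    ∀ x ∈ RatAlg A L, truncDiv A d x ∈ RatAlg A L := by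
  intro x hx
  have hx' : x ∈ Algebra.adjoin A (SGen A L) := by
    have hle : RatAlg A L ≤ Algebra.adjoin A (SGen A L) := by
      apply Algebra.adjoin_le
      rintro f ⟨a, b, hb, rfl⟩
      rw [ringInverse_eq L a hb]
      set w : A := ((L ^ (-a) : Aˣ) : A) with hw
      have hgen : (X : PowerSeries A) ^ b * geomPS w b ∈ Algebra.adjoin A (SGen A L) :=
        Algebra.subset_adjoin ⟨-a, b, b, hb, le_refl b, rfl⟩
      have heq : (X : PowerSeries A) ^ b * -(C w * geomPS w b)
          = -(C w * ((X : PowerSeries A) ^ b * geomPS w b)) := by ring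
      rw [heq]
      refine neg_mem (mul_mem ?_ hgen)
      rw [PowerSeries.C_eq_algebraMap]
      exact Subalgebra.algebraMap_mem _ _
    exact hle hx
  rw [← Subalgebra.mem_toSubmodule, Algebra.adjoin_eq_span] at hx'
  rw [truncDiv_eq_sliceL hd]
  clear hx
  induction hx' using Submodule.span_induction with
  | mem y hy =>
    obtain ⟨l, hl, rfl⟩ := Submonoid.exists_list_of_mem_closure hy
    exact slice_list_prod L hd l hl 0
  | zero =>
    rw [map_zero]
    exact zero_mem _
  | add y z hy hz ihy ihz =>
    rw [map_add]
    exact add_mem ihy ihz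
  | smul a y hy ihy =>
    rw [map_smul]
    exact Subalgebra.smul_mem _ ihy a
end

section
/- Let A be a commutative ring, L a unit of A, and d ≥ 1 an integer. Let x be an element of the A-subalgebra 𝓡 of A[[T]] generated by the elements T^b·(T^b − L^a)^{−1} (a ∈ ℤ, b ≥ 1), and suppose (P,Q) is a lim-representation of x. Then the truncation x[d] admits a lim-representation (P₁,Q₁) such that the coefficient of T^{deg Q₁} in P₁ equals the coefficient of T^{deg Q} in P. -/
open PowerSeries

namespace Stmt7Aux

open Polynomial

variable {A : Type*} [CommRing A]

/-- Truncation of a polynomial keeping coefficients in degrees divisible by `d`. -/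
noncomputable def truncPoly (d : ℕ) (P : A[X]) : A[X] :=
  ∑ i ∈ Finset.range (P.natDegree + 1),
    if d ∣ i then Polynomial.monomial i (P.coeff i) else 0

lemma coeff_truncPoly (d : ℕ) (P : A[X]) (j : ℕ) :
    (truncPoly d P).coeff j = if d ∣ j then P.coeff j else 0 := by
  rw [truncPoly, Polynomial.finset_sum_coeff]
  by_cases hj : j ∈ Finset.range (P.natDegree + 1)
  · rw [Finset.sum_eq_single j]
    · split_ifs with h
      · rw [Polynomial.coeff_monomial, if_pos rfl]
      · simp
    · intro i _ hij
      split_ifs with h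
      · rw [Polynomial.coeff_monomial, if_neg hij]
      · simp
    · exact fun h => absurd hj h
  · have hP : P.coeff j = 0 := by
      apply P.coeff_eq_zero_of_natDegree_lt
      simpa [Nat.lt_succ_iff, Nat.not_le] using hj
    have hz : ∀ i ∈ Finset.range (P.natDegree + 1),
        (if d ∣ i then Polynomial.monomial i (P.coeff i) else 0).coeff j = 0 := by
      intro i hi
      split_ifs with h
      · rw [Polynomial.coeff_monomial, if_neg]
        rintro rfl; exact hj hi
      · simp
    rw [Finset.sum_eq_zero hz, hP]
    split_ifs <;> rfl

lemma degree_truncPoly_le (d : ℕ) (P : A[X]) : (truncPoly d P).degree ≤ P.degree := by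
  rw [Polynomial.degree_le_iff_coeff_zero]
  intro m hm
  rw [coeff_truncPoly]
  have h0 : P.coeff m = 0 := Polynomial.coeff_eq_zero_of_degree_lt hm
  simp [h0]

lemma coe_truncPoly (d : ℕ) (P : A[X]) :
    ((truncPoly d P : A[X]) : PowerSeries A) = truncDiv A d (P : PowerSeries A) := by
  ext n
  rw [truncDiv, PowerSeries.coeff_mk, Polynomial.coeff_coe, coeff_truncPoly,
    Polynomial.coeff_coe]

lemma truncDiv_mul (d : ℕ) (f g : PowerSeries A)
    (hg : ∀ i, ¬ d ∣ i → PowerSeries.coeff i g = 0) :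
    truncDiv A d (f * g) = truncDiv A d f * g := by
  ext n
  rw [truncDiv, truncDiv, PowerSeries.coeff_mk, PowerSeries.coeff_mul]
  by_cases hn : d ∣ n
  · rw [if_pos hn, PowerSeries.coeff_mul]
    apply Finset.sum_congr rfl
    rintro ⟨i, j⟩ hp
    rw [Finset.HasAntidiagonal.mem_antidiagonal] at hp
    rw [PowerSeries.coeff_mk]
    by_cases hi : d ∣ i
    · rw [if_pos hi]
    · rw [if_neg hi, zero_mul]
      have hj : ¬ d ∣ j := fun hj => hi (by
        have : i = n - j := by omega
        subst this; exact Nat.dvd_sub hn hj)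
      rw [hg j hj, mul_zero]
  · rw [if_neg hn, PowerSeries.coeff_mul]
    symm
    apply Finset.sum_eq_zero
    rintro ⟨i, j⟩ hp
    rw [Finset.HasAntidiagonal.mem_antidiagonal] at hp
    rw [PowerSeries.coeff_mk]
    by_cases hi : d ∣ i
    · have hj : ¬ d ∣ j := fun hj => hn (by
        subst hp; exact Nat.dvd_add hi hj)
      rw [hg j hj, mul_zero]
    · rw [if_neg hi, zero_mul]

lemma coeff_mul_top {P R : A[X]} {n : ℕ} (hP : P.degree ≤ (n : WithBot ℕ)) (hR : R.Monic) :
    (P * R).coeff (n + R.natDegree) = P.coeff n := by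
  nontriviality A
  rw [Polynomial.coeff_mul, Finset.sum_eq_single (n, R.natDegree)]
  · rw [hR.coeff_natDegree, mul_one]
  · rintro ⟨i, j⟩ hij hne
    rw [Finset.HasAntidiagonal.mem_antidiagonal] at hij
    simp only at hij ⊢
    rcases lt_trichotomy i n with hi | rfl | hi
    · have hj : R.natDegree < j := by omega
      rw [R.coeff_eq_zero_of_natDegree_lt hj, mul_zero]
    · exact absurd (by omega : j = R.natDegree) (by simpa using hne)
    · have : P.coeff i = 0 := by
        apply Polynomial.coeff_eq_zero_of_degree_lt
        exact lt_of_le_of_lt hP (by exact_mod_cast hi)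
      rw [this, zero_mul]
  · intro h
    exact absurd (Finset.HasAntidiagonal.mem_antidiagonal (a := (n, R.natDegree)).2 rfl) h

/-- The "limit value" of a lim-representation only depends on `x`. -/
lemma limval_eq {x : PowerSeries A} {P Q P' Q' : A[X]}
    (h : IsLimRep x P Q) (h' : IsLimRep x P' Q') :
    P.coeff Q.natDegree = P'.coeff Q'.natDegree := by
  nontriviality A
  obtain ⟨hQm, -, hPd, hE⟩ := h
  obtain ⟨hQ'm, -, hP'd, hE'⟩ := h'
  have key : P * Q' = P' * Q := by
    have : ((P * Q' : A[X]) : PowerSeries A) = ((P' * Q : A[X]) : PowerSeries A) := by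
      rw [Polynomial.coe_mul, Polynomial.coe_mul, ← hE, ← hE']; ring
    exact_mod_cast this
  have hdQ : Q.degree = (Q.natDegree : WithBot ℕ) := Polynomial.degree_eq_natDegree hQm.ne_zero
  have hdQ' : Q'.degree = (Q'.natDegree : WithBot ℕ) :=
    Polynomial.degree_eq_natDegree hQ'm.ne_zero
  calc P.coeff Q.natDegree = (P * Q').coeff (Q.natDegree + Q'.natDegree) :=
        (coeff_mul_top (hdQ ▸ hPd) hQ'm).symm
    _ = (P' * Q).coeff (Q'.natDegree + Q.natDegree) := by rw [key, Nat.add_comm]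
    _ = P'.coeff Q'.natDegree := coeff_mul_top (hdQ' ▸ hP'd) hQm

variable (L : Aˣ)

/-- The product `∏ (X^b - L^a)` over a multiset of pairs `(a, b)`. -/
noncomputable def Qs (s : Multiset (ℤ × ℕ)) : A[X] :=
  (s.map fun p => Polynomial.X ^ p.2 - Polynomial.C ((L ^ p.1 : Aˣ) : A)).prod

lemma Qs_zero : Qs L (0 : Multiset (ℤ × ℕ)) = 1 := by simp [Qs]

lemma Qs_cons (a : ℤ × ℕ) (s : Multiset (ℤ × ℕ)) :
    Qs L (a ::ₘ s) = (Polynomial.X ^ a.2 - Polynomial.C ((L ^ a.1 : Aˣ) : A)) * Qs L s := by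
  rw [Qs, Qs, Multiset.map_cons, Multiset.prod_cons]

lemma Qs_add (s t : Multiset (ℤ × ℕ)) : Qs L (s + t) = Qs L s * Qs L t := by
  rw [Qs, Qs, Qs, Multiset.map_add, Multiset.prod_add]

lemma Qs_monic {s : Multiset (ℤ × ℕ)} (hs : ∀ p ∈ s, 1 ≤ p.2) : (Qs L s).Monic := by
  apply Polynomial.monic_multiset_prod_of_monic
  intro p hp
  exact Polynomial.monic_X_pow_sub_C _ (Nat.one_le_iff_ne_zero.mp (hs p hp))

lemma Qs_coeff_zero {s : Multiset (ℤ × ℕ)} (hs : ∀ p ∈ s, 1 ≤ p.2) :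
    IsUnit ((Qs L s).coeff 0) := by
  induction s using Multiset.induction with
  | empty => simp [Qs_zero]
  | cons a s ih =>
    rw [Qs_cons, Polynomial.mul_coeff_zero]
    have ha : 1 ≤ a.2 := hs a (Multiset.mem_cons_self a s)
    have h0 : (Polynomial.X ^ a.2 - Polynomial.C ((L ^ a.1 : Aˣ) : A)).coeff 0 =
        -((L ^ a.1 : Aˣ) : A) := by
      rw [Polynomial.coeff_sub, Polynomial.coeff_X_pow, Polynomial.coeff_C,
        if_neg (by omega), if_pos rfl, zero_sub]
    rw [h0]
    exact ((L ^ a.1).isUnit.neg).mul (ih fun p hp => hs p (Multiset.mem_cons_of_mem hp))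

/-- Every element of `RatAlg A L` has a representation `x * Qs s = P` with
`deg P ≤ deg (Qs s)`. -/
lemma exists_rep {x : PowerSeries A} (hx : x ∈ RatAlg A L) :
    ∃ (s : Multiset (ℤ × ℕ)) (P : A[X]), (∀ p ∈ s, 1 ≤ p.2) ∧
      P.degree ≤ (Qs L s).degree ∧
      x * ((Qs L s : A[X]) : PowerSeries A) = (P : PowerSeries A) := by
  rw [RatAlg] at hx
  induction hx using Algebra.adjoin_induction with
  | mem y hy =>
    obtain ⟨a, b, hb, rfl⟩ := hy
    refine ⟨{(a, b)}, Polynomial.X ^ b, ?_, ?_, ?_⟩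
    · intro p hp
      rw [Multiset.mem_singleton] at hp
      subst hp; exact hb
    · show (Polynomial.X ^ b : A[X]).degree ≤ (Qs L {(a, b)}).degree
      have hQ : Qs L {(a, b)} = Polynomial.X ^ b - Polynomial.C ((L ^ a : Aˣ) : A) := by
        rw [show ({(a, b)} : Multiset (ℤ × ℕ)) = (a, b) ::ₘ 0 from rfl, Qs_cons, Qs_zero,
          mul_one]
      rcases subsingleton_or_nontrivial A with hA | hA
      · rw [Subsingleton.elim (Polynomial.X ^ b : A[X]) (Qs L {(a, b)})]
      · rw [hQ, Polynomial.degree_X_pow,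
          Polynomial.degree_X_pow_sub_C (by omega) ((L ^ a : Aˣ) : A)]
    · have hQ : Qs L {(a, b)} = Polynomial.X ^ b - Polynomial.C ((L ^ a : Aˣ) : A) := by
        rw [show ({(a, b)} : Multiset (ℤ × ℕ)) = (a, b) ::ₘ 0 from rfl, Qs_cons, Qs_zero,
          mul_one]
      rw [hQ, Polynomial.coe_sub, Polynomial.coe_pow, Polynomial.coe_X, Polynomial.coe_C]
      have hu : IsUnit ((PowerSeries.X : PowerSeries A) ^ b -
          PowerSeries.C ((L ^ a : Aˣ) : A)) := by
        rw [PowerSeries.isUnit_iff_constantCoeff, map_sub, map_pow,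
          PowerSeries.constantCoeff_X, zero_pow (by omega : b ≠ 0),
          PowerSeries.constantCoeff_C, zero_sub]
        exact (L ^ a).isUnit.neg
      rw [mul_assoc, Ring.inverse_mul_cancel _ hu, mul_one]
  | algebraMap r =>
    refine ⟨0, Polynomial.C r, by simp, ?_, ?_⟩
    · rcases subsingleton_or_nontrivial A with hA | hA
      · rw [Subsingleton.elim (Polynomial.C r) (Qs L 0)]
      · rw [Qs_zero, Polynomial.degree_one]
        exact Polynomial.degree_C_le
    · rw [Qs_zero, Polynomial.coe_one, mul_one, Polynomial.coe_C,
        PowerSeries.algebraMap_apply, Algebra.algebraMap_self_apply]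
  | add y z hy hz ihy ihz =>
    obtain ⟨s, P, hs, hPd, hPe⟩ := ihy
    obtain ⟨t, R, ht, hRd, hRe⟩ := ihz
    refine ⟨s + t, P * Qs L t + R * Qs L s, ?_, ?_, ?_⟩
    · intro p hp
      rw [Multiset.mem_add] at hp
      rcases hp with hp | hp
      exacts [hs p hp, ht p hp]
    · rw [Qs_add, (Qs_monic L ht).degree_mul]
      apply le_trans (Polynomial.degree_add_le _ _)
      apply max_le
      · exact le_trans (Polynomial.degree_mul_le _ _) (add_le_add_left hPd _)
      · refine le_trans (Polynomial.degree_mul_le _ _) ?_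
        rw [add_comm (Qs L s).degree (Qs L t).degree]
        exact add_le_add_left hRd _
    · rw [Qs_add, Polynomial.coe_mul, Polynomial.coe_add, Polynomial.coe_mul,
        Polynomial.coe_mul]
      linear_combination ((Qs L t : A[X]) : PowerSeries A) * hPe +
        ((Qs L s : A[X]) : PowerSeries A) * hRe
  | mul y z hy hz ihy ihz =>
    obtain ⟨s, P, hs, hPd, hPe⟩ := ihy
    obtain ⟨t, R, ht, hRd, hRe⟩ := ihz
    refine ⟨s + t, P * R, ?_, ?_, ?_⟩
    · intro p hp
      rw [Multiset.mem_add] at hp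
      rcases hp with hp | hp
      exacts [hs p hp, ht p hp]
    · rw [Qs_add, (Qs_monic L ht).degree_mul]
      exact le_trans (Polynomial.degree_mul_le _ _) (add_le_add hPd hRd)
    · rw [Qs_add, Polynomial.coe_mul, Polynomial.coe_mul]
      linear_combination (z * ((Qs L t : A[X]) : PowerSeries A)) * hPe +
        ((P : A[X]) : PowerSeries A) * hRe

lemma Qs_dvd_scaled (d : ℕ) (s : Multiset (ℤ × ℕ)) :
    Qs L s ∣ Qs L (s.map fun p => (p.1 * (d : ℤ), p.2 * d)) := by
  induction s using Multiset.induction with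
  | empty => simp [Qs_zero]
  | cons a s ih =>
    rw [Multiset.map_cons, Qs_cons, Qs_cons]
    apply mul_dvd_mul _ ih
    have h1 : (Polynomial.X : A[X]) ^ (a.2 * d) = (Polynomial.X ^ a.2) ^ d := by
      rw [pow_mul]
    have h2 : ((L ^ (a.1 * (d : ℤ)) : Aˣ) : A) = ((L ^ a.1 : Aˣ) : A) ^ d := by
      rw [zpow_mul, zpow_natCast, Units.val_pow_eq_pow_val]
    show _ ∣ Polynomial.X ^ (a.2 * d) - Polynomial.C ((L ^ (a.1 * (d : ℤ)) : Aˣ) : A)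
    rw [h1, h2, map_pow]
    exact sub_dvd_pow_sub_pow _ _ d

lemma Qs_scaled_eq_expand (d : ℕ) (s : Multiset (ℤ × ℕ)) :
    Qs L (s.map fun p => (p.1 * (d : ℤ), p.2 * d)) =
      Polynomial.expand A d (Qs L (s.map fun p => (p.1 * (d : ℤ), p.2))) := by
  induction s using Multiset.induction with
  | empty => simp [Qs_zero]
  | cons a s ih =>
    rw [Multiset.map_cons, Multiset.map_cons, Qs_cons, Qs_cons, map_mul, ih]
    congr 1
    rw [map_sub, map_pow, Polynomial.expand_X, Polynomial.expand_C, ← pow_mul, mul_comm d a.2]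

end Stmt7Aux

/-- `lim_{T→∞} ∘ φ_d = lim_{T→∞}` on 𝓡: if `x ∈ 𝓡` has a
lim-representation `(P, Q)`, then `x[d]` has a lim-representation `(P₁, Q₁)` with the
same limit value. -/
theorem stmt7 {A : Type*} [CommRing A] (L : Aˣ) (d : ℕ) (hd : 1 ≤ d)
    (x : PowerSeries A) (hx : x ∈ RatAlg A L)
    (P Q : Polynomial A) (hPQ : IsLimRep x P Q) :
    ∃ P₁ Q₁ : Polynomial A, IsLimRep (truncDiv A d x) P₁ Q₁ ∧
      P₁.coeff Q₁.natDegree = P.coeff Q.natDegree := by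
  classical
  obtain ⟨s, P₀, hs, hdeg, hEq⟩ := Stmt7Aux.exists_rep L hx
  set t : Multiset (ℤ × ℕ) := s.map (fun p => (p.1 * (d : ℤ), p.2 * d)) with ht
  have hts : ∀ p ∈ t, 1 ≤ p.2 := by
    rintro p hp
    rw [ht, Multiset.mem_map] at hp
    obtain ⟨q, hq, rfl⟩ := hp
    calc 1 = 1 * 1 := (one_mul 1).symm
    _ ≤ q.2 * d := Nat.mul_le_mul (hs q hq) hd
  have hdvd : Stmt7Aux.Qs L s ∣ Stmt7Aux.Qs L t := by
    rw [ht]; exact Stmt7Aux.Qs_dvd_scaled L d s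
  obtain ⟨c, hc⟩ := hdvd
  have hexp : Stmt7Aux.Qs L t =
      Polynomial.expand A d (Stmt7Aux.Qs L (s.map fun p => (p.1 * (d : ℤ), p.2))) := by
    rw [ht]; exact Stmt7Aux.Qs_scaled_eq_expand L d s
  have hQ'm : (Stmt7Aux.Qs L t).Monic := Stmt7Aux.Qs_monic L hts
  have hQ'0 : IsUnit ((Stmt7Aux.Qs L t).coeff 0) := Stmt7Aux.Qs_coeff_zero L hts
  have hdegPt : (P₀ * c).degree ≤ (Stmt7Aux.Qs L t).degree := by
    rw [hc, mul_comm (Stmt7Aux.Qs L s) c, (Stmt7Aux.Qs_monic L hs).degree_mul]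
    refine le_trans (Polynomial.degree_mul_le _ _) ?_
    rw [add_comm c.degree (Stmt7Aux.Qs L s).degree]
    exact add_le_add_left hdeg _
  have hEq' : x * ((Stmt7Aux.Qs L t : Polynomial A) : PowerSeries A) =
      (((P₀ * c : Polynomial A)) : PowerSeries A) := by
    rw [hc, Polynomial.coe_mul, ← mul_assoc, hEq, Polynomial.coe_mul]
  have hrep : IsLimRep x (P₀ * c) (Stmt7Aux.Qs L t) := ⟨hQ'm, hQ'0, hdegPt, hEq'⟩
  have hQ'coeff : ∀ i, ¬ d ∣ i →
      PowerSeries.coeff i ((Stmt7Aux.Qs L t : Polynomial A) : PowerSeries A) = 0 := by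
    intro i hi
    rw [Polynomial.coeff_coe, hexp, Polynomial.coeff_expand (by omega : 0 < d), if_neg hi]
  have hddvd : d ∣ (Stmt7Aux.Qs L t).natDegree := by
    rw [hexp, Polynomial.natDegree_expand]
    exact dvd_mul_left d _
  refine ⟨Stmt7Aux.truncPoly d (P₀ * c), Stmt7Aux.Qs L t, ⟨hQ'm, hQ'0, ?_, ?_⟩, ?_⟩
  · exact le_trans (Stmt7Aux.degree_truncPoly_le d (P₀ * c)) hdegPt
  · rw [Stmt7Aux.coe_truncPoly, ← hEq', Stmt7Aux.truncDiv_mul d x _ hQ'coeff]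
  · rw [Stmt7Aux.coeff_truncPoly, if_pos hddvd]
    exact (Stmt7Aux.limval_eq hPQ hrep).symm
end
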